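/- For any integer partition $\eta$ of $n$ with parts $\eta_1,\dots,\eta_d$, the total weight $\dim(\eta)$ of paths from the empty partition to $\eta$ in the Kingman branching graph equals the multinomial coefficient $\binom{n}{\eta}=\frac{n!}{\eta_1!\cdots\eta_d!}$. -/

import Mathlib

open Finset

/-- Kingman-graph edge weight `χ(ω,η)`: for a covering pair, the increased part size is
the unique element of `η - ω`, and the weight is the number of parts of `η` of that size. -/
def chiW (ω η : Multiset ℕ) : ℕ := η.count ((η - ω).sum)

/-- The partitions covering `ω` (increase one part by `1`, or add a new part `1`). -/
def upSet (ω : Multiset ℕ) : Finset (Multiset ℕ) :=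
  insert (1 ::ₘ ω) (ω.toFinset.image (fun k => (k + 1) ::ₘ ω.erase k))

/-- The partitions covered by `η` (decrease one part by `1`, deleting it if it was `1`). -/
def downSet (η : Multiset ℕ) : Finset (Multiset ℕ) :=
  η.toFinset.image (fun k => if k = 1 then η.erase 1 else (k - 1) ::ₘ η.erase k)

/-- Total path weight from `ω` up to `η` in the Kingman graph, with fuel. -/
def kdimAux : ℕ → Multiset ℕ → Multiset ℕ → ℕ
  | 0, ω, η => if ω = η then 1 else 0
  | m + 1, ω, η => ∑ lam ∈ downSet η, chiW lam η * kdimAux m ω lam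

/-- `dim(ω, η)`: total path weight from `ω` to `η`. -/
def kdim (ω η : Multiset ℕ) : ℕ := kdimAux (η.sum - ω.sum) ω η

/-- Multinomial coefficient `(|η| choose η)` as a rational. -/
def multQ (η : Multiset ℕ) : ℚ := (Nat.factorial η.sum : ℚ) / ((η.map Nat.factorial).prod : ℕ)

/-- Multinomial coefficient as a real. -/
noncomputable def multR (η : Multiset ℕ) : ℝ := (Nat.factorial η.sum : ℝ) / ((η.map Nat.factorial).prod : ℕ)

/-- Young-diagram containment `ω ⊂ η` (componentwise on ranked parts, via conjugates). -/
def ydLE (ω η : Multiset ℕ) : Prop :=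
  ∀ k, Multiset.card (ω.filter (fun a => k ≤ a)) ≤ Multiset.card (η.filter (fun a => k ≤ a))

/-- Rising factorial `a (a+1) ⋯ (a+k-1)`. -/
noncomputable def riseF (a : ℝ) (k : ℕ) : ℝ := ∏ i ∈ Finset.range k, (a + i)

/-- Ewens–Pitman moment `m(η) = 𝔼_{α,θ}[ ̃P_η]` (the `θ`-factor cancelled form of
`∏_{l=0}^{d-1}(θ+lα)/(θ)_{(n)} ∏ (1-α)_{(η_i-1)}`). -/
noncomputable def EPM (α θ : ℝ) (η : Multiset ℕ) : ℝ :=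
  (∏ l ∈ Finset.Ico 1 (Multiset.card η), (θ + l * α)) /
      (∏ i ∈ Finset.Ico 1 η.sum, (θ + i)) *
    (η.map (fun p => riseF (1 - α) (p - 1))).prod

/-- `a₁(η)! ⋯ a_n(η)!`. -/
def aprod (η : Multiset ℕ) : ℕ := ∏ k ∈ Finset.Icc 1 η.sum, Nat.factorial (η.count k)

/-- Chinese-restaurant edge weight `χ_B(ω,η)`. -/
def chiB (ω η : Multiset ℕ) : ℕ :=
  if (η - ω).sum = 1 then 1 else ω.count ((η - ω).sum - 1)

/-- Augmented monomial symmetric function as a real-valued function. -/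
noncomputable def tildePR (N : ℕ) (η : List ℕ) (x : Fin N → ℝ) : ℝ :=
  ∑ f ∈ (Finset.univ : Finset (Fin η.length → Fin N)).filter Function.Injective,
    ∏ j, x (f j) ^ η.get j

/-- Monomial symmetric function: sum over distinct rearrangements of `η`. -/
noncomputable def monoP (N : ℕ) (η : Multiset ℕ) (x : Fin N → ℝ) : ℝ :=
  ∑ v ∈ (Finset.univ : Finset (Fin N → Fin (η.sum + 1))).filter
      (fun v => Multiset.filter (fun a => 0 < a)
        (Multiset.map (fun i => ((v i : ℕ))) (Finset.univ : Finset (Fin N)).val) = η),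
    ∏ i, x i ^ ((v i : ℕ))

/-- `\vec P_η(x) = (n choose η) P_η(x)`. -/
noncomputable def vecP (N : ℕ) (η : Multiset ℕ) (x : Fin N → ℝ) : ℝ :=
  (Nat.factorial η.sum : ℝ) / ((η.map Nat.factorial).prod : ℕ) * monoP N η x

/-- Augmented monomial symmetric polynomial. -/
noncomputable def tildePoly (N : ℕ) (η : List ℕ) : MvPolynomial (Fin N) ℝ :=
  ∑ f ∈ (Finset.univ : Finset (Fin η.length → Fin N)).filter Function.Injective,
    ∏ j, (MvPolynomial.X (f j)) ^ η.get j

/-- The operator `𝓛_{α,θ}` on polynomials. -/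
noncomputable def Lop (α θ : ℝ) {N : ℕ} (p : MvPolynomial (Fin N) ℝ) :
    MvPolynomial (Fin N) ℝ :=
  MvPolynomial.C (1 / 2 : ℝ) *
      (∑ i, ∑ j, MvPolynomial.X i * ((if i = j then 1 else 0) - MvPolynomial.X j) *
        MvPolynomial.pderiv i (MvPolynomial.pderiv j p)) -
    MvPolynomial.C (1 / 2 : ℝ) *
      (∑ i, (MvPolynomial.C θ * MvPolynomial.X i + MvPolynomial.C α) * MvPolynomial.pderiv i p)

/-- The ideal generated by `∑ xᵢ - 1` (identities on the simplex). -/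
noncomputable def simplexIdeal (N : ℕ) : Ideal (MvPolynomial (Fin N) ℝ) :=
  Ideal.span {(∑ i, MvPolynomial.X i) - 1}

-- auxiliary
private def fdn (η : Multiset ℕ) (k : ℕ) : Multiset ℕ :=
  if k = 1 then η.erase 1 else (k - 1) ::ₘ η.erase k

lemma fdn_count_self (η : Multiset ℕ) (k : ℕ) (hkpos : 0 < k) :
    (fdn η k).count k = η.count k - 1 := by
  unfold fdn
  split_ifs with h
  · subst h; simp [Multiset.count_erase_self]
  · rw [Multiset.count_cons]
    simp [Multiset.count_erase_self, show ¬ (k = k - 1) by omega]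

lemma fdn_count_other (η : Multiset ℕ) (k k' : ℕ) (h : k ≠ k') :
    η.count k ≤ (fdn η k').count k := by
  unfold fdn
  split_ifs with h1
  · subst h1; rw [Multiset.count_erase_of_ne h]
  · rw [Multiset.count_cons, Multiset.count_erase_of_ne h]
    omega

lemma fdn_injOn (η : Multiset ℕ) (hpos : ∀ a ∈ η, 0 < a) :
    Set.InjOn (fdn η) η.toFinset := by
  intro k hk k' hk' hkk'
  by_contra hne
  have hkmem : k ∈ η := Multiset.mem_toFinset.mp hk
  have h1 : (fdn η k).count k = η.count k - 1 :=
    fdn_count_self η k (hpos k hkmem)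
  have h2 : η.count k ≤ (fdn η k').count k := fdn_count_other η k k' hne
  rw [hkk'] at h1
  have : 0 < η.count k := Multiset.count_pos.mpr hkmem
  omega

lemma fdn_sub (η : Multiset ℕ) (k : ℕ) (hk : k ∈ η) (hkpos : 0 < k) :
    η - fdn η k = {k} := by
  unfold fdn
  ext a
  rw [Multiset.count_sub]
  split_ifs with h
  · subst h
    by_cases ha : a = 1
    · subst ha
      rw [Multiset.count_erase_self]
      have : 0 < η.count 1 := Multiset.count_pos.mpr hk
      simp; omega
    · rw [Multiset.count_erase_of_ne ha, Multiset.count_singleton]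
      simp [ha]
  · rw [Multiset.count_cons]
    by_cases ha : a = k
    · subst ha
      rw [Multiset.count_erase_self]
      have : 0 < η.count a := Multiset.count_pos.mpr hk
      rw [Multiset.count_singleton, if_pos rfl, if_neg (show ¬ (a = a - 1) by omega)]
      omega
    · rw [Multiset.count_erase_of_ne ha, Multiset.count_singleton]
      simp only [if_neg ha]
      split_ifs <;> omega

lemma fdn_chiW (η : Multiset ℕ) (k : ℕ) (hk : k ∈ η) (hkpos : 0 < k) :
    chiW (fdn η k) η = η.count k := by
  unfold chiW
  rw [fdn_sub η k hk hkpos, Multiset.sum_singleton]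

lemma fdn_sum (η : Multiset ℕ) (k : ℕ) (hk : k ∈ η) (hpos : 0 < k) :
    (fdn η k).sum + 1 = η.sum := by
  have he : η.sum = k + (η.erase k).sum := by
    conv_lhs => rw [← Multiset.cons_erase hk]
    rw [Multiset.sum_cons]
  unfold fdn
  split_ifs with h
  · subst h; omega
  · rw [Multiset.sum_cons]; omega

lemma fdn_pos (η : Multiset ℕ) (k : ℕ) (hk : k ∈ η) (hpos : ∀ a ∈ η, 0 < a) :
    ∀ a ∈ fdn η k, 0 < a := by
  intro a ha
  unfold fdn at ha
  split_ifs at ha with h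
  · exact hpos a (Multiset.mem_of_mem_erase ha)
  · rcases Multiset.mem_cons.mp ha with h1 | h1
    · have := hpos k hk; omega
    · exact hpos a (Multiset.mem_of_mem_erase h1)

lemma fdn_factprod (η : Multiset ℕ) (k : ℕ) (hk : k ∈ η) (hpos : 0 < k) :
    (η.map Nat.factorial).prod = k * ((fdn η k).map Nat.factorial).prod := by
  have he : (η.map Nat.factorial).prod = k.factorial * ((η.erase k).map Nat.factorial).prod := by
    conv_lhs => rw [← Multiset.cons_erase hk]
    rw [Multiset.map_cons, Multiset.prod_cons]
  unfold fdn
  split_ifs with h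
  · subst h; simpa using he
  · rw [Multiset.map_cons, Multiset.prod_cons, he, ← mul_assoc]
    congr 1
    rw [← Nat.mul_factorial_pred hpos.ne']

lemma key (n : ℕ) : ∀ η : Multiset ℕ, (∀ a ∈ η, 0 < a) → η.sum = n →
    (kdim 0 η : ℚ) = (Nat.factorial n : ℚ) / ((η.map Nat.factorial).prod : ℕ) := by
  induction n with
  | zero =>
    intro η hpos hsum
    have hη : η = 0 := by
      rw [Multiset.eq_zero_iff_forall_notMem]
      intro a ha
      have := hpos a ha
      have := Multiset.single_le_sum (fun x _ => Nat.zero_le x) a ha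
      omega
    subst hη
    simp [kdim, kdimAux]
  | succ n ih =>
    intro η hpos hsum
    have h0 : kdim 0 η = ∑ lam ∈ downSet η, chiW lam η * kdimAux n 0 lam := by
      unfold kdim
      simp only [Multiset.sum_zero, Nat.sub_zero, hsum]
      rfl
    have hds : downSet η = η.toFinset.image (fdn η) := rfl
    rw [h0, hds, Finset.sum_image (fdn_injOn η hpos)]
    push_cast
    have hterm : ∀ k ∈ η.toFinset,
        ((chiW (fdn η k) η : ℚ) * (kdimAux n 0 (fdn η k) : ℚ)) =
          (η.count k * k : ℚ) * ((Nat.factorial n : ℚ) / ((η.map Nat.factorial).prod : ℕ)) := by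
      intro k hk
      have hkmem : k ∈ η := Multiset.mem_toFinset.mp hk
      have hkpos : 0 < k := hpos k hkmem
      have hsumf : (fdn η k).sum = n := by
        have := fdn_sum η k hkmem hkpos; omega
      have hkd : kdimAux n 0 (fdn η k) = kdim 0 (fdn η k) := by
        unfold kdim
        rw [hsumf]
        rfl
      rw [fdn_chiW η k hkmem hkpos, hkd, ih (fdn η k) (fdn_pos η k hkmem hpos) hsumf]
      have hP : ((η.map Nat.factorial).prod : ℚ) =
          (k : ℚ) * (((fdn η k).map Nat.factorial).prod : ℕ) := by
        rw [fdn_factprod η k hkmem hkpos]; push_cast; ring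
      have hPf : (((fdn η k).map Nat.factorial).prod : ℚ) ≠ 0 := by
        have : 0 < ((fdn η k).map Nat.factorial).prod :=
          Multiset.prod_pos (by
            intro x hx
            rcases Multiset.mem_map.mp hx with ⟨a, _, rfl⟩
            exact Nat.factorial_pos a)
        positivity
      rw [hP]
      have hk0 : (k : ℚ) ≠ 0 := by positivity
      have hcancel : ((n.factorial : ℚ)) / ((k : ℚ) * (((fdn η k).map Nat.factorial).prod : ℕ)) =
          (n.factorial : ℚ) / (((fdn η k).map Nat.factorial).prod : ℕ) / k := by
        rw [div_div, mul_comm]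
      rw [hcancel, mul_assoc, mul_comm (k : ℚ), div_mul_cancel₀ _ hk0]
    rw [Finset.sum_congr rfl hterm, ← Finset.sum_mul]
    have hsum2 : (∑ k ∈ η.toFinset, ((η.count k : ℚ) * k)) = (n + 1 : ℚ) := by
      have : (∑ k ∈ η.toFinset, η.count k * k) = η.sum := by
        conv_rhs => rw [← Multiset.toFinset_sum_count_nsmul_eq η]
        rw [Multiset.sum_sum]
        simp [Multiset.sum_nsmul, mul_comm]
      have h2 : (∑ k ∈ η.toFinset, η.count k * k) = n + 1 := by rw [this, hsum]
      exact_mod_cast h2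
    rw [hsum2]
    rw [Nat.factorial_succ]
    push_cast
    ring

/-- `dim(η)`, the total path weight from `∅` to `η` in the Kingman branching graph,
equals the multinomial coefficient `(n choose η)`. -/
theorem kdim_empty_eq_multinomial (n : ℕ) (η : Multiset ℕ)
    (hpos : ∀ a ∈ η, 0 < a) (hsum : η.sum = n) :
    (kdim 0 η : ℚ) = (Nat.factorial n : ℚ) / ((η.map Nat.factorial).prod : ℕ) := by
  exact key n η hpos hsum
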